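/- Let A = 15+4√14, B = 15-4√14. For i ≥ 0 define c_{4i+4} = ((86+23√14)A^i-(86-23√14)B^i)/(2√14) and e_{4i+4} = ((101+27√14)A^i-(101-27√14)B^i)/(2√14). Then for every n ≥ 2, Σ_{k=1}^{n-1} c_{4k} · e_{4(n-k)} = ((n-1)/56)·[(17380+4645√14)A^{n-2} + (17380-4645√14)B^{n-2}] + (√14/392)·(A^{n-1} - B^{n-1}). -/

import Mathlib

theorem stmt_9
    (c4 e4 : ℕ → ℝ)
    (hc4 : ∀ i : ℕ, c4 i =
      ((86 + 23 * Real.sqrt 14) * (15 + 4 * Real.sqrt 14) ^ i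
        - (86 - 23 * Real.sqrt 14) * (15 - 4 * Real.sqrt 14) ^ i)
      / (2 * Real.sqrt 14))
    (he4 : ∀ i : ℕ, e4 i =
      ((101 + 27 * Real.sqrt 14) * (15 + 4 * Real.sqrt 14) ^ i
        - (101 - 27 * Real.sqrt 14) * (15 - 4 * Real.sqrt 14) ^ i)
      / (2 * Real.sqrt 14)) :
    ∀ n : ℕ, 2 ≤ n →
      ∑ k ∈ Finset.Icc 1 (n-1), c4 (k-1) * e4 (n - k - 1) =
        ((n - 1 : ℝ) / 56) * ((17380 + 4645 * Real.sqrt 14) * (15 + 4 * Real.sqrt 14) ^ (n-2)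
          + (17380 - 4645 * Real.sqrt 14) * (15 - 4 * Real.sqrt 14) ^ (n-2))
        + (Real.sqrt 14 / 392) *
            ((15 + 4 * Real.sqrt 14) ^ (n-1) - (15 - 4 * Real.sqrt 14) ^ (n-1)) := by
  intro n hn
  have hs : Real.sqrt 14 * Real.sqrt 14 = 14 := Real.mul_self_sqrt (by norm_num)
  have hspos : (0:ℝ) < Real.sqrt 14 := Real.sqrt_pos.mpr (by norm_num)
  set s := Real.sqrt 14 with hsdef
  have hsne : s ≠ 0 := ne_of_gt hspos
  obtain ⟨m, rfl⟩ : ∃ m, n = m + 1 := ⟨n - 1, by omega⟩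
  have hm : 1 ≤ m := by omega
  set A : ℝ := 15 + 4 * s with hA
  set B : ℝ := 15 - 4 * s with hB
  have hsub2 : m + 1 - 2 = m - 1 := by omega
  rw [show m + 1 - 1 = m from rfl, hsub2]
  rw [← Finset.Ico_add_one_right_eq_Icc, Finset.sum_Ico_eq_sum_range]
  rw [show m + 1 - 1 = m from rfl]
  have hterm : ∀ i ∈ Finset.range m,
      c4 (1 + i - 1) * e4 (m + 1 - (1 + i) - 1) =
      ((17380 + 4645*s) * A^(m-1) + (17380 - 4645*s) * B^(m-1)
        + (8 - s) * (A^i * B^(m-1-i)) + (8 + s) * (B^i * A^(m-1-i))) / 56 := by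
    intro i hi
    have hi' : i < m := Finset.mem_range.mp hi
    have h1 : 1 + i - 1 = i := by omega
    have h2 : m + 1 - (1 + i) - 1 = m - 1 - i := by omega
    rw [h1, h2, hc4, he4]
    have hpA : A ^ i * A ^ (m-1-i) = A ^ (m-1) := by
      rw [← pow_add]; congr 1; omega
    have hpB : B ^ i * B ^ (m-1-i) = B ^ (m-1) := by
      rw [← pow_add]; congr 1; omega
    rw [← hpA, ← hpB]
    field_simp
    linear_combination ((-18580*s - 34744)*(A^i*A^(m-1-i)) + (18580*s - 34744)*(B^i*B^(m-1-i))
      + (4*s + 34744)*(A^i*B^(m-1-i)) + (-4*s + 34744)*(B^i*A^(m-1-i))) * hs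
  rw [Finset.sum_congr rfl hterm]
  have hT1 : (∑ i ∈ Finset.range m, A ^ i * B ^ (m - 1 - i)) * (A - B) = A ^ m - B ^ m :=
    geom_sum₂_mul A B m
  have hT2 : (∑ i ∈ Finset.range m, B ^ i * A ^ (m - 1 - i)) * (B - A) = B ^ m - A ^ m :=
    geom_sum₂_mul B A m
  set T1 := ∑ i ∈ Finset.range m, A ^ i * B ^ (m - 1 - i) with hT1def
  set T2 := ∑ i ∈ Finset.range m, B ^ i * A ^ (m - 1 - i) with hT2def
  have hsum : ∑ i ∈ Finset.range m,
      ((17380 + 4645*s) * A^(m-1) + (17380 - 4645*s) * B^(m-1)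
        + (8 - s) * (A^i * B^(m-1-i)) + (8 + s) * (B^i * A^(m-1-i))) / 56
      = (m * ((17380 + 4645*s) * A^(m-1) + (17380 - 4645*s) * B^(m-1))
          + (8 - s) * T1 + (8 + s) * T2) / 56 := by
    rw [← Finset.sum_div]
    congr 1
    simp only [Finset.sum_add_distrib, Finset.sum_const, Finset.card_range,
      ← Finset.mul_sum, nsmul_eq_mul, hT1def, hT2def]
    ring
  rw [hsum]
  push_cast
  field_simp
  linear_combination (-224*T1 - 224*T2) * hs + (28*s - 49) * hT1 + (-28*s - 49) * hT2
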